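/- For every pair of integers n ≥ 4 and 3 ≤ l ≤ n−1, there exists a tree T with exactly n vertices and exactly l leaves such that tr(T) = 6·⌊(n−1)/l⌋ + 2·min{(n−1) mod l, 3}. -/

import Mathlib

/-- The triameter of a graph `G`: the maximum of `d(a,b) + d(a,c) + d(b,c)`
over all triples of vertices `a, b, c`. -/
noncomputable def SimpleGraph.triameter {V : Type*} [Fintype V] (G : SimpleGraph V) : ℕ :=
  Finset.univ.sup fun p : V × V × V =>
    G.dist p.1 p.2.1 + G.dist p.1 p.2.2 + G.dist p.2.1 p.2.2

open SimpleGraph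

namespace SpiderTri

/-- length of leg `i`. -/
def len (q r : ℕ) {l : ℕ} (i : Fin l) : ℕ := q + if i.1 < r then 1 else 0

lemma len_pos {q r l : ℕ} (hq : 1 ≤ q) (i : Fin l) : 0 < len q r i :=
  Nat.lt_of_lt_of_le hq (Nat.le_add_right q _)

/-- Vertex type: `none` is the center; `some ⟨i, j⟩` is the vertex at height `j+1` on leg `i`. -/
abbrev V (l q r : ℕ) := Option ((i : Fin l) × Fin (len q r i))

def parent {l q r : ℕ} : V l q r → V l q r
  | none => none
  | some ⟨i, j⟩ =>
      if h : j.1 = 0 then none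
      else some ⟨i, ⟨j.1 - 1, Nat.lt_of_le_of_lt (Nat.sub_le j.1 1) j.2⟩⟩

def ht {l q r : ℕ} : V l q r → ℕ
  | none => 0
  | some ⟨_, j⟩ => j.1 + 1

def leg {l q r : ℕ} : V l q r → Option (Fin l) := Option.map Sigma.fst

lemma ht_parent {l q r : ℕ} (x : V l q r) (hx : x ≠ none) : ht (parent x) + 1 = ht x := by
  match x with
  | none => exact absurd rfl hx
  | some ⟨i, j⟩ =>
      by_cases h : j.1 = 0
      · simp [parent, h, ht]
      · simp [parent, h, ht]; omega

lemma ht_parent_le {l q r : ℕ} (x : V l q r) : ht (parent x) ≤ ht x := by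
  by_cases hx : x = none
  · subst hx; exact le_rfl
  · have := ht_parent x hx; omega

lemma leg_parent {l q r : ℕ} (x : V l q r) : parent x = none ∨ leg (parent x) = leg x := by
  match x with
  | none => exact Or.inl rfl
  | some ⟨i, j⟩ =>
      by_cases h : j.1 = 0
      · left; simp [parent, h]
      · right; simp [parent, h, leg]

/-- The spider graph. -/
def G (l q r : ℕ) : SimpleGraph (V l q r) where
  Adj u v := u ≠ v ∧ (parent u = v ∨ parent v = u)
  symm := ⟨fun u v ⟨h1, h2⟩ => ⟨h1.symm, h2.symm⟩⟩
  loopless := ⟨fun u h => h.1 rfl⟩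

instance (l q r : ℕ) : DecidableRel (G l q r).Adj :=
  fun u v => inferInstanceAs (Decidable (u ≠ v ∧ (parent u = v ∨ parent v = u)))

lemma adj_parent {l q r : ℕ} (x : V l q r) (hx : x ≠ none) : (G l q r).Adj x (parent x) := by
  refine ⟨?_, Or.inl rfl⟩
  intro h
  have h1 := ht_parent x hx
  rw [← h] at h1
  omega

lemma ht_adj {l q r : ℕ} {u v : V l q r} (h : (G l q r).Adj u v) :
    ht u = ht v + 1 ∨ ht v = ht u + 1 := by
  rcases h.2 with h2 | h2
  · left
    have hu : u ≠ none := by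
      rintro rfl
      exact h.1 h2
    have := ht_parent u hu; rw [h2] at this; omega
  · right
    have hv : v ≠ none := by
      rintro rfl
      exact h.1 h2.symm
    have := ht_parent v hv; rw [h2] at this; omega

lemma leg_adj {l q r : ℕ} {u v : V l q r} (h : (G l q r).Adj u v) :
    leg u = leg v ∨ u = none ∨ v = none := by
  rcases h.2 with h2 | h2
  · rcases leg_parent u with h3 | h3
    · right; right; rw [← h2, h3]
    · left; rw [← h2, h3]
  · rcases leg_parent v with h3 | h3
    · right; left; rw [← h2, h3]
    · left; rw [← h2, h3]


lemma parent_zero {l q r : ℕ} (i : Fin l) (h : 0 < len q r i) :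
    parent (some ⟨i, ⟨0, h⟩⟩ : V l q r) = none := rfl

lemma parent_succ {l q r : ℕ} (i : Fin l) (k : ℕ) (h : k + 1 < len q r i) :
    parent (some ⟨i, ⟨k + 1, h⟩⟩ : V l q r) =
      some ⟨i, ⟨k, Nat.lt_of_succ_lt h⟩⟩ := rfl

lemma adj_base {l q r : ℕ} (i : Fin l) (h : 0 < len q r i) :
    (G l q r).Adj (some ⟨i, ⟨0, h⟩⟩) none := by
  have := adj_parent (l := l) (q := q) (r := r) (some ⟨i, ⟨0, h⟩⟩) (by simp)
  rwa [parent_zero] at this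

lemma adj_step {l q r : ℕ} (i : Fin l) (k : ℕ) (h : k + 1 < len q r i) :
    (G l q r).Adj (some ⟨i, ⟨k + 1, h⟩⟩) (some ⟨i, ⟨k, Nat.lt_of_succ_lt h⟩⟩) := by
  have := adj_parent (l := l) (q := q) (r := r) (some ⟨i, ⟨k + 1, h⟩⟩) (by simp)
  rwa [parent_succ] at this

/-- Walk from a leg vertex down to the center. -/
def descend {l q r : ℕ} (i : Fin l) : (k : ℕ) → (hk : k < len q r i) →
    (G l q r).Walk (some ⟨i, ⟨k, hk⟩⟩) none
  | 0, hk => Walk.cons (adj_base i hk) Walk.nil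
  | k + 1, hk => Walk.cons (adj_step i k hk) (descend i k (Nat.lt_of_succ_lt hk))

lemma descend_length {l q r : ℕ} (i : Fin l) : ∀ (k : ℕ) (hk : k < len q r i),
    (descend i k hk).length = k + 1
  | 0, hk => rfl
  | k + 1, hk => by
      simp [descend, descend_length i k (Nat.lt_of_succ_lt hk)]

/-- Walk within a leg, from height `a+d` down to height `a`. -/
def seg {l q r : ℕ} (i : Fin l) (a : ℕ) : (d : ℕ) → (h : a + d < len q r i) →
    (G l q r).Walk (some ⟨i, ⟨a + d, h⟩⟩) (some ⟨i, ⟨a, Nat.lt_of_le_of_lt (Nat.le_add_right a d) h⟩⟩)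
  | 0, h => Walk.nil
  | d + 1, h => Walk.cons (adj_step i (a + d) h) (seg i a d (Nat.lt_of_succ_lt h))

lemma seg_length {l q r : ℕ} (i : Fin l) (a : ℕ) : ∀ (d : ℕ) (h : a + d < len q r i),
    (seg i a d h).length = d
  | 0, _ => rfl
  | d + 1, h => by simp [seg, seg_length i a d (Nat.lt_of_succ_lt h)]

/-- Walk from any vertex to the center, of length `ht x`. -/
def toCenter {l q r : ℕ} : (x : V l q r) → (G l q r).Walk x none
  | none => Walk.nil
  | some ⟨i, j⟩ => descend i j.1 j.2

lemma toCenter_length {l q r : ℕ} (x : V l q r) : (toCenter x).length = ht x := by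
  match x with
  | none => rfl
  | some ⟨i, j⟩ => simpa [toCenter, ht] using descend_length i j.1 j.2

lemma connected (l q r : ℕ) : (G l q r).Connected := by
  have : Nonempty (V l q r) := ⟨none⟩
  exact Connected.mk fun u v =>
    (toCenter u).reachable.trans (toCenter v).reachable.symm

lemma abs_le_length {l q r : ℕ} {f : V l q r → ℤ}
    (hf : ∀ u v, (G l q r).Adj u v → |f u - f v| ≤ 1) :
    ∀ {u v : V l q r} (w : (G l q r).Walk u v), |f u - f v| ≤ w.length := by
  intro u v w
  induction w with
  | nil => simp
  | @cons u b v h p ih =>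
      have h1 := hf u b h
      have : |f u - f v| ≤ |f u - f b| + |f b - f v| := abs_sub_le _ _ _
      simp only [Walk.length_cons]
      push_cast
      linarith

lemma le_dist {l q r : ℕ} {f : V l q r → ℤ}
    (hf : ∀ u v, (G l q r).Adj u v → |f u - f v| ≤ 1) (u v : V l q r) :
    f u - f v ≤ ((G l q r).dist u v : ℤ) := by
  obtain ⟨w, hw⟩ := ((connected l q r) u v).exists_walk_length_eq_dist
  calc f u - f v ≤ |f u - f v| := le_abs_self _
    _ ≤ (w.length : ℤ) := abs_le_length hf w
    _ = _ := by rw [hw]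

/-- the height function is 1-Lipschitz -/
lemma ht_lip (l q r : ℕ) :
    ∀ u v : V l q r, (G l q r).Adj u v → |(ht u : ℤ) - (ht v : ℤ)| ≤ 1 := by
  intro u v h
  rcases ht_adj h with h1 | h1 <;> rw [abs_le] <;> constructor <;> omega

/-- the leg-`i`-signed height function is 1-Lipschitz -/
lemma cross_lip (l q r : ℕ) (i : Fin l) :
    ∀ u v : V l q r, (G l q r).Adj u v →
      |(if leg u = some i then (ht u : ℤ) else -(ht u)) -
        (if leg v = some i then (ht v : ℤ) else -(ht v))| ≤ 1 := by
  intro u v h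
  have h1 := ht_adj h
  rcases leg_adj h with h2 | h2 | h2
  · rw [h2]
    split_ifs <;> rw [abs_le] <;> constructor <;> omega
  · subst h2
    have : ht (none : V l q r) = 0 := rfl
    split_ifs <;> rw [abs_le] <;> constructor <;> omega
  · subst h2
    have : ht (none : V l q r) = 0 := rfl
    split_ifs <;> rw [abs_le] <;> constructor <;> omega


lemma dist_center {l q r : ℕ} (i : Fin l) (j : Fin (len q r i)) :
    (G l q r).dist (some ⟨i, j⟩) none = j.1 + 1 := by
  refine le_antisymm ?_ ?_
  · have := SimpleGraph.dist_le (descend i j.1 j.2)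
    rwa [descend_length] at this
  · have := le_dist (ht_lip l q r) (some ⟨i, j⟩) none
    have h0 : ht (none : V l q r) = 0 := rfl
    have h1 : ht (some ⟨i, j⟩ : V l q r) = j.1 + 1 := rfl
    rw [h0, h1] at this
    omega

lemma dist_same' {l q r : ℕ} (i : Fin l) (a d : ℕ) (h : a + d < len q r i)
    (h' : a < len q r i) :
    (G l q r).dist (some ⟨i, ⟨a + d, h⟩⟩) (some ⟨i, ⟨a, h'⟩⟩) = d := by
  refine le_antisymm ?_ ?_
  · have := SimpleGraph.dist_le (seg i a d h)
    rwa [seg_length] at this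
  · have := le_dist (ht_lip l q r) (some ⟨i, ⟨a + d, h⟩⟩) (some ⟨i, ⟨a, h'⟩⟩)
    have h1 : ht (some ⟨i, ⟨a + d, h⟩⟩ : V l q r) = a + d + 1 := rfl
    have h2 : ht (some ⟨i, ⟨a, h'⟩⟩ : V l q r) = a + 1 := rfl
    rw [h1, h2] at this
    omega

lemma dist_same {l q r : ℕ} (i : Fin l) (a b : Fin (len q r i)) (hab : b.1 ≤ a.1) :
    (G l q r).dist (some ⟨i, a⟩) (some ⟨i, b⟩) = a.1 - b.1 := by
  have key := dist_same' i b.1 (a.1 - b.1) (by omega) b.2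
  rw [show (⟨b.1 + (a.1 - b.1), by omega⟩ : Fin (len q r i)) = a from Fin.ext (by simp; omega),
    Fin.eta] at key
  exact key

lemma dist_cross {l q r : ℕ} (i i' : Fin l) (hne : i ≠ i') (a : Fin (len q r i))
    (b : Fin (len q r i')) :
    (G l q r).dist (some ⟨i, a⟩) (some ⟨i', b⟩) = (a.1 + 1) + (b.1 + 1) := by
  refine le_antisymm ?_ ?_
  · have := SimpleGraph.dist_le ((descend i a.1 a.2).append (descend i' b.1 b.2).reverse)
    rwa [Walk.length_append, Walk.length_reverse, descend_length, descend_length] at this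
  · have := le_dist (cross_lip l q r i) (some ⟨i, a⟩) (some ⟨i', b⟩)
    have h1 : leg (some ⟨i, a⟩ : V l q r) = some i := rfl
    have h2 : leg (some ⟨i', b⟩ : V l q r) = some i' := rfl
    rw [h1, h2, if_pos rfl, if_neg (by simpa using (Ne.symm hne))] at this
    have h3 : ht (some ⟨i, a⟩ : V l q r) = a.1 + 1 := rfl
    have h4 : ht (some ⟨i', b⟩ : V l q r) = b.1 + 1 := rfl
    rw [h3, h4] at this
    omega

lemma dist_le_ht {l q r : ℕ} (u v : V l q r) :
    (G l q r).dist u v ≤ ht u + ht v := by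
  have := SimpleGraph.dist_le ((toCenter u).append (toCenter v).reverse)
  rwa [Walk.length_append, Walk.length_reverse, toCenter_length, toCenter_length] at this

lemma dist_sameish {l q r : ℕ} {u v : V l q r}
    (h : leg u = leg v ∨ u = none ∨ v = none) :
    (G l q r).dist u v + min (ht u) (ht v) ≤ max (ht u) (ht v) := by
  rcases h with h | h | h
  · match u, v with
    | none, none => simp
    | none, some ⟨i, j⟩ => exact absurd h (by simp [leg])
    | some ⟨i, j⟩, none => exact absurd h (by simp [leg])
    | some ⟨i, a⟩, some ⟨i', b⟩ =>
        have hii : i = i' := by simpa [leg] using h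
        subst hii
        have h1 : ht (some ⟨i, a⟩ : V l q r) = a.1 + 1 := rfl
        have h2 : ht (some ⟨i, b⟩ : V l q r) = b.1 + 1 := rfl
        rw [h1, h2]
        rcases le_total b.1 a.1 with hab | hab
        · rw [dist_same i a b hab]; omega
        · rw [SimpleGraph.dist_comm, dist_same i b a hab]; omega
  · subst h
    have h0 : ht (none : V l q r) = 0 := rfl
    have := dist_le_ht (none : V l q r) v
    rw [h0] at *
    omega
  · subst h
    have h0 : ht (none : V l q r) = 0 := rfl
    have := dist_le_ht u (none : V l q r)
    rw [h0] at *
    omega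


lemma ht_le {l q r : ℕ} (v : V l q r) : ht v ≤ q + min r 1 := by
  match v with
  | none => exact Nat.zero_le _
  | some ⟨i, j⟩ =>
      have h2 := j.2
      unfold len at h2
      have h1 : ht (some ⟨i, j⟩ : V l q r) = j.1 + 1 := rfl
      rw [h1]
      split_ifs at h2 with h <;> omega

lemma bound_sameish {l q r : ℕ} (hq : 1 ≤ q) (a b c : V l q r)
    (h : leg a = leg b ∨ a = none ∨ b = none) :
    (G l q r).dist a b + (G l q r).dist a c + (G l q r).dist b c ≤ 6 * q + 2 * min r 3 := by
  have h1 := dist_sameish h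
  have h2 := dist_le_ht a c
  have h3 := dist_le_ht b c
  have h4 := ht_le (q := q) (r := r) a
  have h5 := ht_le (q := q) (r := r) b
  have h6 := ht_le (q := q) (r := r) c
  omega

lemma triple_bound {l q r : ℕ} (hq : 1 ≤ q) (a b c : V l q r) :
    (G l q r).dist a b + (G l q r).dist a c + (G l q r).dist b c ≤ 6 * q + 2 * min r 3 := by
  by_cases sab : leg a = leg b ∨ a = none ∨ b = none
  · exact bound_sameish hq a b c sab
  by_cases sac : leg a = leg c ∨ a = none ∨ c = none
  · have := bound_sameish hq a c b sac
    have hcb : (G l q r).dist c b = (G l q r).dist b c := SimpleGraph.dist_comm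
    rw [hcb] at this
    omega
  by_cases sbc : leg b = leg c ∨ b = none ∨ c = none
  · have := bound_sameish hq b c a sbc
    have hba : (G l q r).dist b a = (G l q r).dist a b := SimpleGraph.dist_comm
    have hca : (G l q r).dist c a = (G l q r).dist a c := SimpleGraph.dist_comm
    rw [hba, hca] at this
    omega
  push_neg at sab sac sbc
  match a, b, c with
  | none, _, _ => exact absurd rfl sab.2.1
  | _, none, _ => exact absurd rfl sab.2.2
  | _, _, none => exact absurd rfl sac.2.2
  | some ⟨ia, xa⟩, some ⟨ib, xb⟩, some ⟨ic, xc⟩ =>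
      have hab : ia ≠ ib := fun h => sab.1 (by simp [leg, h])
      have hac : ia ≠ ic := fun h => sac.1 (by simp [leg, h])
      have hbc : ib ≠ ic := fun h => sbc.1 (by simp [leg, h])
      rw [dist_cross ia ib hab, dist_cross ia ic hac, dist_cross ib ic hbc]
      have h2 := xa.2
      have h3 := xb.2
      have h4 := xc.2
      unfold len at h2 h3 h4
      have vab : ia.1 ≠ ib.1 := fun h => hab (Fin.ext h)
      have vac : ia.1 ≠ ic.1 := fun h => hac (Fin.ext h)
      have vbc : ib.1 ≠ ic.1 := fun h => hbc (Fin.ext h)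
      by_cases c1 : ia.1 < r <;> by_cases c2 : ib.1 < r <;> by_cases c3 : ic.1 < r <;>
        simp only [if_pos, if_neg, c1, c2, c3, if_true, if_false] at h2 h3 h4 <;> omega

/-- The leaf at the end of leg `i`. -/
def leaf {l : ℕ} (q r : ℕ) (hq : 1 ≤ q) (i : Fin l) : V l q r :=
  some ⟨i, ⟨len q r i - 1, Nat.sub_lt (len_pos hq i) one_pos⟩⟩

lemma dist_leaf {l q r : ℕ} (hq : 1 ≤ q) (i i' : Fin l) (hne : i ≠ i') :
    (G l q r).dist (leaf q r hq i) (leaf q r hq i') = len q r i + len q r i' := by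
  have h1 := len_pos (r := r) hq i
  have h2 := len_pos (r := r) hq i'
  rw [leaf, leaf, dist_cross i i' hne]
  simp
  omega

lemma triameter_eq {l : ℕ} (q r : ℕ) (hl : 3 ≤ l) (hq : 1 ≤ q) :
    (G l q r).triameter = 6 * q + 2 * min r 3 := by
  unfold SimpleGraph.triameter
  refine le_antisymm ?_ ?_
  · exact Finset.sup_le fun (p : V l q r × V l q r × V l q r) _ =>
      triple_bound hq p.1 p.2.1 p.2.2
  · have h0 : (0 : ℕ) < l := by omega
    have h1 : (1 : ℕ) < l := by omega
    have h2 : (2 : ℕ) < l := by omega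
    set i0 : Fin l := ⟨0, h0⟩
    set i1 : Fin l := ⟨1, h1⟩
    set i2 : Fin l := ⟨2, h2⟩
    have e01 : i0 ≠ i1 := by simp [i0, i1, Fin.ext_iff]
    have e02 : i0 ≠ i2 := by simp [i0, i2, Fin.ext_iff]
    have e12 : i1 ≠ i2 := by simp [i1, i2, Fin.ext_iff]
    have key := Finset.le_sup
      (f := fun p : V l q r × V l q r × V l q r =>
        (G l q r).dist p.1 p.2.1 + (G l q r).dist p.1 p.2.2 + (G l q r).dist p.2.1 p.2.2)
      (Finset.mem_univ (leaf q r hq i0, leaf q r hq i1, leaf q r hq i2))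
    simp only [dist_leaf hq i0 i1 e01, dist_leaf hq i0 i2 e02, dist_leaf hq i1 i2 e12] at key
    have hlen : len q r i0 + len q r i1 + len q r i2 = 3 * q + min r 3 := by
      show (q + if (0:ℕ) < r then 1 else 0) + (q + if (1:ℕ) < r then 1 else 0)
          + (q + if (2:ℕ) < r then 1 else 0) = 3 * q + min r 3
      by_cases c0 : (0:ℕ) < r <;> by_cases c1 : (1:ℕ) < r <;> by_cases c2 : (2:ℕ) < r <;>
        simp only [c0, c1, c2, if_true, if_false] <;> omega
    omega


/-- `below u v` : `u` is an ancestor (or equal) of `v`. -/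
def below {l q r : ℕ} (u v : V l q r) : Prop := ∃ k, parent^[k] v = u

lemma below_refl {l q r : ℕ} (u : V l q r) : below u u := ⟨0, rfl⟩

lemma ht_pit_le {l q r : ℕ} (k : ℕ) (v : V l q r) : ht (parent^[k] v) ≤ ht v := by
  induction k with
  | zero => exact le_rfl
  | succ k ih =>
      rw [Function.iterate_succ_apply']
      exact le_trans (ht_parent_le _) ih

lemma below_iff {l q r : ℕ} (u x : V l q r) :
    below u x ↔ x = u ∨ below u (parent x) := by
  constructor
  · rintro ⟨k, hk⟩
    match k with
    | 0 => exact Or.inl hk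
    | k + 1 =>
        right
        exact ⟨k, by rwa [Function.iterate_succ_apply] at hk⟩
  · rintro (rfl | ⟨k, hk⟩)
    · exact below_refl _
    · exact ⟨k + 1, by rwa [Function.iterate_succ_apply]⟩

lemma not_below_parent {l q r : ℕ} (u : V l q r) (hu : u ≠ none) :
    ¬ below u (parent u) := by
  rintro ⟨k, hk⟩
  have h1 := ht_pit_le (q := q) (r := r) k (parent u)
  rw [hk] at h1
  have h2 := ht_parent u hu
  omega

lemma walk_invariant {l q r : ℕ} {u : V l q r} (hu : u ≠ none) :
    ∀ {x y : V l q r} (w : (G l q r).Walk x y),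
      s(u, parent u) ∉ w.edges → (below u x ↔ below u y) := by
  intro x y w
  induction w with
  | nil => exact fun _ => Iff.rfl
  | @cons x z y h p ih =>
      intro he
      rw [Walk.edges_cons, List.mem_cons] at he
      push_neg at he
      refine Iff.trans ?_ (ih he.2)
      have hne : s(u, parent u) ≠ s(x, z) := he.1
      rcases h.2 with h2 | h2
      · -- parent x = z
        have hxu : x ≠ u := by
          rintro rfl
          exact hne (by rw [h2])
        rw [below_iff u x, h2]
        simp [hxu]
      · -- parent z = x
        have hzu : z ≠ u := by
          rintro rfl
          exact hne (by rw [h2, Sym2.eq_swap])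
        rw [below_iff u z, h2]
        simp [hzu]

lemma acyclic (l q r : ℕ) : (G l q r).IsAcyclic := by
  rw [isAcyclic_iff_forall_adj_isBridge]
  intro v w hvw
  rw [isBridge_iff_adj_and_forall_walk_mem_edges]
  refine fun p => ?_
  by_contra hp
  rcases hvw.2 with h2 | h2
  · have hv : v ≠ none := by
      rintro rfl
      exact hvw.1 h2
    have := walk_invariant hv p (by rwa [h2])
    rw [← h2] at this
    exact not_below_parent v hv (this.mp (below_refl v))
  · have hw : w ≠ none := by
      rintro rfl
      exact hvw.1 h2.symm
    have hswap : s(w, parent w) = s(v, w) := by rw [h2, Sym2.eq_swap]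
    have := walk_invariant hw p (by rwa [hswap])
    rw [← h2] at this
    exact not_below_parent w hw (this.mpr (below_refl w))

lemma isTree (l q r : ℕ) : (G l q r).IsTree := ⟨connected l q r, acyclic l q r⟩


lemma sum_len (l q r : ℕ) (hr : r ≤ l) : ∑ i : Fin l, len q r i = l * q + r := by
  simp only [len]
  rw [Finset.sum_add_distrib, Finset.sum_const, Finset.card_univ, Fintype.card_fin,
    smul_eq_mul]
  congr 1
  rw [Fin.sum_univ_eq_sum_range (fun i => if i < r then 1 else 0)]
  rw [Finset.sum_boole]
  have : (Finset.range l).filter (· < r) = Finset.range r := by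
    ext x; simp; omega
  rw [this, Finset.card_range]
  simp

lemma card_V (l q r : ℕ) (hr : r ≤ l) : Fintype.card (V l q r) = l * q + r + 1 := by
  rw [Fintype.card_option, Fintype.card_sigma]
  simp only [Fintype.card_fin]
  rw [sum_len l q r hr]

lemma degree_leaf {l q r : ℕ} (hq : 1 ≤ q) (i : Fin l) :
    (G l q r).degree (leaf q r hq i) = 1 := by
  have hlf : (leaf q r hq i : V l q r) ≠ none := by simp [leaf]
  have hset : (G l q r).neighborFinset (leaf q r hq i) = {parent (leaf q r hq i)} := by
    ext u
    rw [mem_neighborFinset, Finset.mem_singleton]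
    constructor
    · intro h
      rcases h.2 with h2 | h2
      · exact h2.symm
      · exfalso
        have hu : u ≠ none := by
          rintro rfl
          exact hlf h2.symm
        have hht := ht_parent u hu
        rw [h2] at hht
        have hh2 : ht (leaf q r hq i : V l q r) = len q r i := by
          have := len_pos (r := r) hq i
          simp [leaf, ht]
          omega
        rcases leg_parent u with h3 | h3
        · rw [h2] at h3; exact hlf h3
        · rw [h2] at h3
          match u with
          | some ⟨i', j'⟩ =>
              have hi : i' = i := by simpa [leg, leaf] using h3.symm
              subst hi
              have hj := j'.2
              have : ht (some ⟨i', j'⟩ : V l q r) = j'.1 + 1 := rfl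
              omega
    · rintro rfl
      exact adj_parent _ hlf
  rw [← SimpleGraph.card_neighborFinset_eq_degree, hset, Finset.card_singleton]

lemma two_le_degree_center {l q r : ℕ} (hl : 2 ≤ l) (hq : 1 ≤ q) :
    2 ≤ (G l q r).degree none := by
  have h0 : (0 : ℕ) < l := by omega
  have h1 : (1 : ℕ) < l := by omega
  set x1 : V l q r := some ⟨⟨0, h0⟩, ⟨0, len_pos hq _⟩⟩
  set x2 : V l q r := some ⟨⟨1, h1⟩, ⟨0, len_pos hq _⟩⟩
  have hsub : ({x1, x2} : Finset (V l q r)) ⊆ (G l q r).neighborFinset none := by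
    intro t ht
    rw [Finset.mem_insert, Finset.mem_singleton] at ht
    rw [mem_neighborFinset]
    rcases ht with rfl | rfl
    · exact (adj_base _ _).symm
    · exact (adj_base _ _).symm
  have hne : x1 ≠ x2 := by
    intro h
    have := congrArg (leg (q := q) (r := r)) h
    simp [x1, x2, leg, Fin.ext_iff] at this
  calc 2 = ({x1, x2} : Finset (V l q r)).card := (Finset.card_pair hne).symm
    _ ≤ ((G l q r).neighborFinset none).card := Finset.card_le_card hsub
    _ = _ := (G l q r).card_neighborFinset_eq_degree none

lemma two_le_degree_mid {l q r : ℕ} (i : Fin l) (j : Fin (len q r i))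
    (hj : j.1 + 1 < len q r i) : 2 ≤ (G l q r).degree (some ⟨i, j⟩) := by
  set v : V l q r := some ⟨i, j⟩
  have hv : v ≠ none := by simp [v]
  set x2 : V l q r := some ⟨i, ⟨j.1 + 1, hj⟩⟩
  have hadj2 : (G l q r).Adj v x2 := by
    have := adj_step i j.1 hj
    have hfin : (⟨j.1, Nat.lt_of_succ_lt hj⟩ : Fin (len q r i)) = j := Fin.ext rfl
    rw [hfin] at this
    exact this.symm
  have hsub : ({parent v, x2} : Finset (V l q r)) ⊆ (G l q r).neighborFinset v := by
    intro t ht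
    rw [Finset.mem_insert, Finset.mem_singleton] at ht
    rw [mem_neighborFinset]
    rcases ht with rfl | rfl
    · exact adj_parent _ hv
    · exact hadj2
  have hne : parent v ≠ x2 := by
    intro h
    have h1 := ht_parent v hv
    have h2 : ht v = j.1 + 1 := rfl
    have h3 : ht (x2 : V l q r) = j.1 + 2 := rfl
    rw [h] at h1
    omega
  calc 2 = ({parent v, x2} : Finset (V l q r)).card := (Finset.card_pair hne).symm
    _ ≤ ((G l q r).neighborFinset v).card := Finset.card_le_card hsub
    _ = _ := (G l q r).card_neighborFinset_eq_degree v

@[simp] lemma leg_some {l q r : ℕ} (i : Fin l) (j : Fin (len q r i)) :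
    leg (some ⟨i, j⟩ : V l q r) = some i := rfl

lemma leaf_injective {l q r : ℕ} (hq : 1 ≤ q) :
    Function.Injective (leaf (l := l) q r hq) := by
  intro i i' h
  simpa [leaf] using congrArg (leg (q := q) (r := r)) h

lemma card_leaves {l q r : ℕ} (hl : 3 ≤ l) (hq : 1 ≤ q) :
    (Finset.univ.filter fun v : V l q r => (G l q r).degree v = 1).card = l := by
  have hset : (Finset.univ.filter fun v : V l q r => (G l q r).degree v = 1)
      = Finset.univ.image (leaf q r hq) := by
    ext v
    rw [Finset.mem_filter, Finset.mem_image]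
    simp only [Finset.mem_univ, true_and]
    constructor
    · intro hdeg
      match v with
      | none =>
          have := two_le_degree_center (l := l) (q := q) (r := r) (by omega) hq
          omega
      | some ⟨i, j⟩ =>
          refine ⟨i, ?_⟩
          have hj := j.2
          by_cases hend : j.1 + 1 = len q r i
          · have : (⟨len q r i - 1, Nat.sub_lt (len_pos hq i) one_pos⟩ : Fin (len q r i)) = j :=
              Fin.ext (by simp; omega)
            rw [leaf, this]
          · have := two_le_degree_mid i j (by omega)
            omega
    · rintro ⟨i, rfl⟩
      exact degree_leaf hq i
  rw [hset, Finset.card_image_of_injective _ (leaf_injective hq), Finset.card_univ,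
    Fintype.card_fin]

end SpiderTri

/-- For every pair of integers `n ≥ 4` and `3 ≤ l ≤ n - 1` there is a tree with exactly
`n` vertices and exactly `l` leaves whose triameter equals
`6⌊(n-1)/l⌋ + 2·min{(n-1) mod l, 3}`. -/
theorem exists_tree_triameter_eq (n l : ℕ) (hn : 4 ≤ n) (hl : 3 ≤ l) (hln : l ≤ n - 1) :
    ∃ (V : Type) (_ : Fintype V) (T : SimpleGraph V) (_ : DecidableRel T.Adj),
      T.IsTree ∧ Fintype.card V = n ∧
      (Finset.univ.filter fun v : V => T.degree v = 1).card = l ∧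
      T.triameter = 6 * ((n - 1) / l) + 2 * min ((n - 1) % l) 3 := by
  set q := (n - 1) / l with hq'
  set r := (n - 1) % l with hr'
  have hl0 : 0 < l := by omega
  have hq : 1 ≤ q := (Nat.one_le_div_iff hl0).mpr hln
  have hr : r < l := Nat.mod_lt _ hl0
  refine ⟨SpiderTri.V l q r, inferInstance, SpiderTri.G l q r, inferInstance,
    SpiderTri.isTree l q r, ?_, SpiderTri.card_leaves hl hq, ?_⟩
  · rw [SpiderTri.card_V l q r (le_of_lt hr)]
    have := Nat.div_add_mod (n - 1) l
    rw [← hq', ← hr'] at this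
    omega
  · rw [SpiderTri.triameter_eq q r hl hq]
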